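/- Let k be a field, n ≥ 2, and let f = x0·x1·l2···l_{n-1}·x2 where x0, x1, l2,…,l_{n-1} are pairwise non-proportional linear forms in the ideal (x0,x1) ⊂ k[x0,x1,x2]. Then the ideal I generated by the three partial derivatives of f has height at least 2; equivalently, the three partial derivatives of f have no common irreducible factor. -/

import Mathlib

open MvPolynomial

lemma prime_lin {k : Type*} [Field k] {c d : k} (hc : c ≠ 0) :
    Prime (C c * X 0 + C d * X 1 : MvPolynomial (Fin 3) k) := by
  rw [← MulEquiv.prime_iff (finSuccEquiv k 2).toMulEquiv]
  have h1 : (1 : Fin 3) = Fin.succ 0 := rfl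
  have he : (finSuccEquiv k 2) (C c * X 0 + C d * X 1) =
      (Polynomial.X - Polynomial.C (C (-(c⁻¹ * d)) * X 0)) * Polynomial.C (C c) := by
    rw [h1, map_add, map_mul, map_mul, finSuccEquiv_X_zero, finSuccEquiv_X_succ]
    have hC : ∀ r : k, (finSuccEquiv k 2) (C r) = Polynomial.C (C r) := fun r => by
      simp [finSuccEquiv_apply]
    have hd : (C d : MvPolynomial (Fin 2) k) = C c * C (c⁻¹ * d) := by
      rw [← C_mul, ← mul_assoc, mul_inv_cancel₀ hc, one_mul]
    rw [hC, hC, sub_mul, ← Polynomial.C_mul, hd]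
    simp only [neg_mul, map_neg, map_mul]
    ring
  have hu : IsUnit (Polynomial.C (C c) : Polynomial (MvPolynomial (Fin 2) k)) :=
    (isUnit_iff_ne_zero.mpr hc).map (Polynomial.C.comp (C : k →+* MvPolynomial (Fin 2) k))
  have hp := Polynomial.prime_X_sub_C (C (-(c⁻¹ * d)) * X 0 : MvPolynomial (Fin 2) k)
  have h := (associated_mul_unit_left _ _ hu).symm.prime hp
  show Prime ((finSuccEquiv k 2) (C c * X 0 + C d * X 1))
  rw [he]; exact h

lemma prime_lin' {k : Type*} [Field k] {c d : k} (h : c ≠ 0 ∨ d ≠ 0) :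
    Prime (C c * X 0 + C d * X 1 : MvPolynomial (Fin 3) k) := by
  rcases h with hc | hd
  · exact prime_lin hc
  · rw [← MulEquiv.prime_iff (renameEquiv k (Equiv.swap (0 : Fin 3) 1)).toMulEquiv]
    show Prime ((rename (Equiv.swap (0 : Fin 3) 1)) (C c * X 0 + C d * X 1))
    rw [map_add, map_mul, map_mul, rename_C, rename_C, rename_X, rename_X,
      Equiv.swap_apply_left, Equiv.swap_apply_right, add_comm]
    exact prime_lin hd

lemma prime_X0 {k : Type*} [Field k] : Prime (X 0 : MvPolynomial (Fin 3) k) := by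
  simpa using prime_lin (k := k) (c := 1) (d := 0) one_ne_zero

lemma prime_X1 {k : Type*} [Field k] : Prime (X 1 : MvPolynomial (Fin 3) k) := by
  simpa using prime_lin' (k := k) (c := 0) (d := 1) (Or.inr one_ne_zero)

lemma lin_dvd_eval {k : Type*} [Field k] {p q : MvPolynomial (Fin 3) k} (h : p ∣ q)
    (v : Fin 3 → k) (hp : eval v p = 0) : eval v q = 0 := by
  obtain ⟨r, rfl⟩ := h; simp [hp]


/-- For `f = x0·x1·l2⋯l_{n-1}·x2` with `x0, x1, l2, …, l_{n-1}` pairwise non-proportional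
linear forms in `(x0, x1)`, the three partial derivatives of `f` have no common non-unit
factor (equivalently, the jacobian ideal of `f` has height at least `2`). -/
theorem stmt2 {k : Type*} [Field k] (n : ℕ) (hn : 2 ≤ n)
    (a b : Fin (n - 2) → k)
    -- each `l_i = a_i·x0 + b_i·x1` is non-proportional to `x1` and to `x0`
    (ha : ∀ i, a i ≠ 0) (hb : ∀ i, b i ≠ 0)
    -- the `l_i` are pairwise non-proportional
    (hab : ∀ i j, i ≠ j → a i * b j ≠ a j * b i)
    (f : MvPolynomial (Fin 3) k)
    (hf : f = X 0 * X 1 * (∏ i, (C (a i) * X 0 + C (b i) * X 1)) * X 2) :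
    ∀ g : MvPolynomial (Fin 3) k,
      g ∣ pderiv (0 : Fin 3) f → g ∣ pderiv (1 : Fin 3) f → g ∣ pderiv (2 : Fin 3) f →
        IsUnit g := by
  classical
  intro g hg0 hg1 hg2
  set L : Fin (n - 2) → MvPolynomial (Fin 3) k := fun i => C (a i) * X 0 + C (b i) * X 1 with hL
  set Q : MvPolynomial (Fin 3) k := ∏ i, L i with hQdef
  have hprimeL : ∀ i, Prime (L i) := fun i => prime_lin (ha i)
  have hQ2 : pderiv (2 : Fin 3) Q = 0 := by
    refine Finset.prod_induction L (fun q => pderiv (2 : Fin 3) q = 0)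
      (fun x y hx hy => by rw [pderiv_mul, hx, hy]; ring)
      (by simp) (fun i _ => ?_)
    simp [hL, pderiv_C_mul, pderiv_X_of_ne (show (0 : Fin 3) ≠ 2 by decide),
      pderiv_X_of_ne (show (1 : Fin 3) ≠ 2 by decide)]
  subst hf
  have h0 : pderiv (0 : Fin 3) (X 0 * X 1 * Q * X 2)
      = (X 1 * Q + X 0 * X 1 * pderiv (0 : Fin 3) Q) * X 2 := by
    simp only [pderiv_mul, pderiv_X_self, pderiv_X_of_ne (show (1 : Fin 3) ≠ 0 by decide),
      pderiv_X_of_ne (show (2 : Fin 3) ≠ 0 by decide)]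
    ring
  have h1 : pderiv (1 : Fin 3) (X 0 * X 1 * Q * X 2)
      = (X 0 * Q + X 0 * X 1 * pderiv (1 : Fin 3) Q) * X 2 := by
    simp only [pderiv_mul, pderiv_X_self, pderiv_X_of_ne (show (0 : Fin 3) ≠ 1 by decide),
      pderiv_X_of_ne (show (2 : Fin 3) ≠ 1 by decide)]
    ring
  have h2 : pderiv (2 : Fin 3) (X 0 * X 1 * Q * X 2) = X 0 * X 1 * Q := by
    simp only [pderiv_mul, hQ2, pderiv_X_self,
      pderiv_X_of_ne (show (0 : Fin 3) ≠ 2 by decide),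
      pderiv_X_of_ne (show (1 : Fin 3) ≠ 2 by decide)]
    ring
  rw [h0] at hg0; rw [h1] at hg1; rw [h2] at hg2
  by_contra hgU
  have hQ0 : Q ≠ 0 := Finset.prod_ne_zero_iff.mpr fun i _ => (hprimeL i).ne_zero
  have hP0 : (X 0 * X 1 * Q : MvPolynomial (Fin 3) k) ≠ 0 :=
    mul_ne_zero (mul_ne_zero (X_ne_zero 0) (X_ne_zero 1)) hQ0
  have hgne : g ≠ 0 := by rintro rfl; exact hP0 (zero_dvd_iff.mp hg2)
  obtain ⟨p, hpirr, hpg⟩ := WfDvdMonoid.exists_irreducible_factor hgU hgne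
  have hp : Prime p := UniqueFactorizationMonoid.irreducible_iff_prime.mp hpirr
  have hpP : p ∣ X 0 * X 1 * Q := hpg.trans hg2
  rcases hp.2.2 _ _ hpP with hca | hcQ
  · rcases hp.2.2 _ _ hca with hc0 | hc1
    · -- p associated to X 0
      have hass := hpirr.associated_of_dvd prime_X0.irreducible hc0
      have hX0 : (X 0 : MvPolynomial (Fin 3) k) ∣
          (X 1 * Q + X 0 * X 1 * pderiv (0 : Fin 3) Q) * X 2 :=
        hass.symm.dvd.trans (hpg.trans hg0)
      rcases prime_X0.2.2 _ _ hX0 with h | h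
      · have h' : (X 0 : MvPolynomial (Fin 3) k) ∣ X 1 * Q :=
          (dvd_add_left ⟨X 1 * pderiv (0 : Fin 3) Q, by ring⟩).mp h
        rcases prime_X0.2.2 _ _ h' with h'' | h''
        · have := lin_dvd_eval h'' ![0, 1, 0] (by simp)
          simp at this
        · obtain ⟨i, -, hi⟩ := prime_X0.exists_mem_finset_dvd h''
          have := lin_dvd_eval hi ![0, 1, 0] (by simp)
          simp [hL] at this
          exact hb i this
      · have := lin_dvd_eval h ![0, 0, 1] (by simp)
        simp at this
    · -- p associated to X 1
      have hass := hpirr.associated_of_dvd prime_X1.irreducible hc1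
      have hX1 : (X 1 : MvPolynomial (Fin 3) k) ∣
          (X 0 * Q + X 0 * X 1 * pderiv (1 : Fin 3) Q) * X 2 :=
        hass.symm.dvd.trans (hpg.trans hg1)
      rcases prime_X1.2.2 _ _ hX1 with h | h
      · have h' : (X 1 : MvPolynomial (Fin 3) k) ∣ X 0 * Q :=
          (dvd_add_left ⟨X 0 * pderiv (1 : Fin 3) Q, by ring⟩).mp h
        rcases prime_X1.2.2 _ _ h' with h'' | h''
        · have := lin_dvd_eval h'' ![1, 0, 0] (by simp)
          simp at this
        · obtain ⟨i, -, hi⟩ := prime_X1.exists_mem_finset_dvd h''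
          have := lin_dvd_eval hi ![1, 0, 0] (by simp)
          simp [hL] at this
          exact ha i this
      · have := lin_dvd_eval h ![0, 0, 1] (by simp)
        simp at this
  · -- p divides Q, hence associated to some L j
    obtain ⟨j, -, hj⟩ := hp.exists_mem_finset_dvd hcQ
    have hass := hpirr.associated_of_dvd (hprimeL j).irreducible hj
    have hLd : L j ∣ (X 1 * Q + X 0 * X 1 * pderiv (0 : Fin 3) Q) * X 2 :=
      hass.symm.dvd.trans (hpg.trans hg0)
    set v : Fin 3 → k := ![b j, -(a j), 1] with hv
    have hvL : eval v (L j) = 0 := by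
      simp [hL, hv]
      ring
    rcases (hprimeL j).2.2 _ _ hLd with h | h
    swap
    · have := lin_dvd_eval h v hvL
      simp [hv] at this
    · set R : MvPolynomial (Fin 3) k := ∏ i ∈ Finset.univ.erase j, L i with hR
      have hQR : Q = L j * R := (Finset.mul_prod_erase _ _ (Finset.mem_univ j)).symm
      have hD0L : pderiv (0 : Fin 3) (L j) = C (a j) := by
        simp [hL, pderiv_C_mul, pderiv_X_self, pderiv_X_of_ne (show (1 : Fin 3) ≠ 0 by decide)]
      have hrw : X 1 * Q + X 0 * X 1 * pderiv (0 : Fin 3) Q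
          = L j * (X 1 * R + X 0 * X 1 * pderiv (0 : Fin 3) R) + C (a j) * (X 0 * (X 1 * R)) := by
        rw [hQR, pderiv_mul, hD0L]; ring
      rw [hrw] at h
      have hkey : L j ∣ C (a j) * (X 0 * (X 1 * R)) :=
        (dvd_add_right (dvd_mul_right _ _)).mp h
      have hu : IsUnit (C (a j) : MvPolynomial (Fin 3) k) :=
        (isUnit_iff_ne_zero.mpr (ha j)).map (C : k →+* MvPolynomial (Fin 3) k)
      have hkey2 : L j ∣ X 0 * (X 1 * R) := (hu.dvd_mul_left).mp hkey
      rcases (hprimeL j).2.2 _ _ hkey2 with h' | h'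
      · have := lin_dvd_eval h' v hvL
        simp [hv] at this
        exact hb j this
      · rcases (hprimeL j).2.2 _ _ h' with h'' | h''
        · have := lin_dvd_eval h'' v hvL
          simp [hv] at this
          exact ha j this
        · obtain ⟨i, himem, hdvd⟩ := (hprimeL j).exists_mem_finset_dvd h''
          have hij : i ≠ j := Finset.ne_of_mem_erase himem
          have heval := lin_dvd_eval hdvd v hvL
          simp [hL, hv] at heval
          exact hab i j hij (by linear_combination heval)
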